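/- Let P_{AB} be a subnormalised probability distribution on a finite set such that P(a,b) > 0 only if a = f(b) for some function f. Then for ε ≥ 0 with tr(P) > √(2ε), the smooth min-entropy satisfies H^ε_min(A|B)_P ≤ log(1/(tr(P) − √(2ε))). -/
import Mathlib


noncomputable section

/-- Optimal guessing probability of `A` given `B` for a classical subnormalised
distribution. -/
def pguess {A B : Type*} [Fintype A] [Fintype B] [Nonempty A] (P : A × B → ℝ) : ℝ :=
  ∑ b : B, ⨆ a : A, P (a, b)

/-- Classical min-entropy `H_min(A|B)_P = -log P_guess(A|B)` (base 2). -/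
def HminC {A B : Type*} [Fintype A] [Fintype B] [Nonempty A] (P : A × B → ℝ) : ℝ :=
  - Real.logb 2 (pguess P)

/-- Generalised fidelity between subnormalised distributions. -/
def genFidC {T : Type*} [Fintype T] (p q : T → ℝ) : ℝ :=
  (∑ t, Real.sqrt (p t * q t) +
    Real.sqrt ((1 - ∑ t, p t) * (1 - ∑ t, q t)))^2

/-- Classical purified distance. -/
def purDistC {T : Type*} [Fintype T] (p q : T → ℝ) : ℝ :=
  Real.sqrt (1 - genFidC p q)

/-- Classical smooth min-entropy (purified-distance smoothing over subnormalised
distributions). -/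
def HminSmC {A B : Type*} [Fintype A] [Fintype B] [Nonempty A]
    (ε : ℝ) (P : A × B → ℝ) : ℝ :=
  sSup {h : ℝ | ∃ P' : A × B → ℝ, (∀ t, 0 ≤ P' t) ∧ (∑ t, P' t) ≤ 1 ∧
    purDistC P P' ≤ ε ∧ h = HminC P'}

/-- L1 distance is bounded by twice the purified distance. -/
lemma abs_sum_le_two_purDistC {T : Type*} [Fintype T] (p q : T → ℝ)
    (hp0 : ∀ t, 0 ≤ p t) (hp1 : ∑ t, p t ≤ 1)
    (hq0 : ∀ t, 0 ≤ q t) (hq1 : ∑ t, q t ≤ 1) :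
    ∑ t, |p t - q t| ≤ 2 * purDistC p q := by
  set u := 1 - ∑ t, p t with hu
  set v := 1 - ∑ t, q t with hv
  have hu0 : 0 ≤ u := by simp only [hu]; linarith
  have hv0 : 0 ≤ v := by simp only [hv]; linarith
  set p' : Option T → ℝ := fun o => o.elim u p with hp'
  set q' : Option T → ℝ := fun o => o.elim v q with hq'
  have hp'0 : ∀ o, 0 ≤ p' o := by rintro (_ | t) <;> simp [hp', hu0, hp0]
  have hq'0 : ∀ o, 0 ≤ q' o := by rintro (_ | t) <;> simp [hq', hv0, hq0]
  set BC : ℝ := ∑ t, Real.sqrt (p t * q t) + Real.sqrt (u * v) with hBC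
  have hF : genFidC p q = BC ^ 2 := rfl
  have key := Finset.sum_mul_sq_le_sq_mul_sq Finset.univ
    (fun o => |Real.sqrt (p' o) - Real.sqrt (q' o)|)
    (fun o => Real.sqrt (p' o) + Real.sqrt (q' o))
  have hab : ∀ o, |Real.sqrt (p' o) - Real.sqrt (q' o)| *
      (Real.sqrt (p' o) + Real.sqrt (q' o)) = |p' o - q' o| := by
    intro o
    rw [← abs_of_nonneg (add_nonneg (Real.sqrt_nonneg _) (Real.sqrt_nonneg _)), ← abs_mul]
    congr 1
    have e1 := Real.sq_sqrt (hp'0 o)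
    have e2 := Real.sq_sqrt (hq'0 o)
    nlinarith [e1, e2]
  have hsqa : ∀ o, |Real.sqrt (p' o) - Real.sqrt (q' o)| ^ 2 =
      p' o + q' o - 2 * Real.sqrt (p' o * q' o) := by
    intro o
    have e1 := Real.sq_sqrt (hp'0 o)
    have e2 := Real.sq_sqrt (hq'0 o)
    have e3 : Real.sqrt (p' o) * Real.sqrt (q' o) = Real.sqrt (p' o * q' o) :=
      (Real.sqrt_mul (hp'0 o) _).symm
    rw [sq_abs]
    nlinarith [e1, e2, e3]
  have hsqb : ∀ o, (Real.sqrt (p' o) + Real.sqrt (q' o)) ^ 2 =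
      p' o + q' o + 2 * Real.sqrt (p' o * q' o) := by
    intro o
    have e1 := Real.sq_sqrt (hp'0 o)
    have e2 := Real.sq_sqrt (hq'0 o)
    have e3 : Real.sqrt (p' o) * Real.sqrt (q' o) = Real.sqrt (p' o * q' o) :=
      (Real.sqrt_mul (hp'0 o) _).symm
    nlinarith [e1, e2, e3]
  have hsum1 : ∑ o, p' o = 1 := by
    rw [Fintype.sum_option]; simp [hp', hu]
  have hsum2 : ∑ o, q' o = 1 := by
    rw [Fintype.sum_option]; simp [hq', hv]
  have hsum3 : ∑ o, Real.sqrt (p' o * q' o) = BC := by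
    rw [Fintype.sum_option, hBC]
    simp [hp', hq']
    ring
  have hsa : ∑ o, |Real.sqrt (p' o) - Real.sqrt (q' o)| ^ 2 = 2 - 2 * BC := by
    rw [Finset.sum_congr rfl (fun o _ => hsqa o), Finset.sum_sub_distrib,
      Finset.sum_add_distrib, ← Finset.mul_sum, hsum1, hsum2, hsum3]
    ring
  have hsb : ∑ o, (Real.sqrt (p' o) + Real.sqrt (q' o)) ^ 2 = 2 + 2 * BC := by
    rw [Finset.sum_congr rfl (fun o _ => hsqb o), Finset.sum_add_distrib,
      Finset.sum_add_distrib, ← Finset.mul_sum, hsum1, hsum2, hsum3]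
    ring
  rw [Finset.sum_congr rfl (fun o _ => hab o), hsa, hsb] at key
  set L : ℝ := ∑ o, |p' o - q' o| with hL
  have hL0 : 0 ≤ L := Finset.sum_nonneg fun o _ => abs_nonneg _
  have hkey : L ^ 2 ≤ 4 * (1 - genFidC p q) := by
    rw [hF]; nlinarith [key]
  have h1F : 0 ≤ 1 - genFidC p q := by nlinarith [sq_nonneg L]
  have hLle : L ≤ 2 * purDistC p q := by
    have := Real.sqrt_le_sqrt hkey
    rw [Real.sqrt_sq hL0] at this
    calc L ≤ Real.sqrt (4 * (1 - genFidC p q)) := this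
      _ = 2 * purDistC p q := by
          rw [purDistC, show (4 : ℝ) = 2 ^ 2 by norm_num, Real.sqrt_mul (by positivity),
            Real.sqrt_sq (by norm_num : (0:ℝ) ≤ 2)]
  have hsub : ∑ t, |p t - q t| ≤ L := by
    rw [hL, Fintype.sum_option]
    have : ∑ t, |p' (some t) - q' (some t)| = ∑ t, |p t - q t| := by simp [hp', hq']
    rw [this]
    have : 0 ≤ |p' none - q' none| := abs_nonneg _
    linarith
  linarith

/-- Lemma E.2: if `A` is a function of `B` under `P`, the smooth min-entropy is
at most `log (1/(tr P − √(2ε)))`. -/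
theorem HminSmC_le_of_deterministic {A B : Type*} [Fintype A] [Fintype B] [Nonempty A]
    (P : A × B → ℝ) (f : B → A) (ε : ℝ)
    (hP0 : ∀ t, 0 ≤ P t) (hP1 : (∑ t, P t) ≤ 1)
    (hdet : ∀ a b, 0 < P (a, b) → a = f b)
    (hε : 0 ≤ ε) (htr : Real.sqrt (2 * ε) < ∑ t, P t) :
    HminSmC ε P ≤ Real.logb 2 (1 / ((∑ t, P t) - Real.sqrt (2 * ε))) := by
  have hc0 : 0 < (∑ t, P t) - Real.sqrt (2 * ε) := sub_pos.mpr htr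
  have hs0 : 0 ≤ Real.sqrt (2 * ε) := Real.sqrt_nonneg _
  have hc1 : (∑ t, P t) - Real.sqrt (2 * ε) ≤ 1 := by linarith
  apply Real.sSup_le
  · rintro x ⟨P', hP'0, hP'1, hdist, rfl⟩
    -- trace of P is concentrated on the graph of f
    have htrP : ∑ t, P t = ∑ b, P (f b, b) := by
      rw [Fintype.sum_prod_type_right]
      refine Finset.sum_congr rfl fun b _ => ?_
      refine Finset.sum_eq_single (f b) (fun a _ ha => ?_) (fun h => absurd (Finset.mem_univ _) h)
      by_contra h
      exact ha (hdet a b (lt_of_le_of_ne (hP0 (a, b)) (Ne.symm h)))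
    have hguess : ∑ b, P' (f b, b) ≤ pguess P' :=
      Finset.sum_le_sum fun b _ =>
        le_ciSup (f := fun a => P' (a, b)) (Set.Finite.bddAbove (Set.finite_range _)) (f b)
    have habs : ∑ b, |P (f b, b) - P' (f b, b)| ≤ ∑ t, |P t - P' t| := by
      classical
      have hinj : ∀ b ∈ Finset.univ, ∀ b' ∈ Finset.univ,
          (fun b => ((f b, b) : A × B)) b = (fun b => ((f b, b) : A × B)) b' → b = b' :=
        fun b _ b' _ h => (Prod.mk.injEq _ _ _ _).mp h |>.2
      calc ∑ b, |P (f b, b) - P' (f b, b)|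
          = ∑ t ∈ Finset.univ.image (fun b => ((f b, b) : A × B)), |P t - P' t| :=
            (Finset.sum_image (g := fun b : B => ((f b, b) : A × B)) (f := fun t : A × B => |P t - P' t|) hinj).symm
        _ ≤ ∑ t, |P t - P' t| :=
            Finset.sum_le_sum_of_subset_of_nonneg (Finset.subset_univ _)
              (fun t _ _ => abs_nonneg _)
    have hTV : ∑ t, |P t - P' t| ≤ 2 * ε := by
      have := abs_sum_le_two_purDistC P P' hP0 hP1 hP'0 hP'1
      have h2 : 2 * purDistC P P' ≤ 2 * ε := by linarith
      linarith
    have h2ε : 2 * ε ≤ Real.sqrt (2 * ε) := by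
      have h2 : Real.sqrt (2 * ε) ≤ 1 := le_trans htr.le hP1
      nlinarith [Real.sq_sqrt (by linarith : (0:ℝ) ≤ 2 * ε)]
    have hdiff : ∑ b, P (f b, b) - ∑ b, P' (f b, b) ≤ 2 * ε := by
      rw [← Finset.sum_sub_distrib]
      calc ∑ b, (P (f b, b) - P' (f b, b)) ≤ ∑ b, |P (f b, b) - P' (f b, b)| :=
            Finset.sum_le_sum fun b _ => le_abs_self _
        _ ≤ ∑ t, |P t - P' t| := habs
        _ ≤ 2 * ε := hTV
    have hlow : (∑ t, P t) - Real.sqrt (2 * ε) ≤ pguess P' := by linarith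
    have hg0 : 0 < pguess P' := lt_of_lt_of_le hc0 hlow
    rw [HminC, one_div, Real.logb_inv]
    exact neg_le_neg ((Real.logb_le_logb one_lt_two hc0 hg0).mpr hlow)
  · apply Real.logb_nonneg one_lt_two
    rw [le_div_iff₀ hc0, one_mul]
    exact hc1

end
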